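/- Let T be a triangle in the Euclidean plane ℝ², i.e., an affinely independent triple of points. Then the incenter of T coincides with the orthocenter of T if and only if T is equilateral, i.e., all three pairwise distances between the vertices of T are equal. -/

import Mathlib

open EuclideanGeometry
open scoped RealInnerProductSpace

noncomputable section

/-- The incenter of a triangle (an affinely independent triple of points) in the
Euclidean plane, i.e. the center of its inscribed circle, given by its standard
barycentric expression: with vertices `A, B, C` and opposite side lengths
`a = dist B C`, `b = dist C A`, `c = dist A B`, it is
`(a • A + b • B + c • C) / (a + b + c)`. -/
def incenter (T : Affine.Triangle ℝ (EuclideanSpace ℝ (Fin 2))) :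
    EuclideanSpace ℝ (Fin 2) :=
  (dist (T.points 1) (T.points 2) / (dist (T.points 1) (T.points 2) +
      dist (T.points 2) (T.points 0) + dist (T.points 0) (T.points 1))) • T.points 0 +
    (dist (T.points 2) (T.points 0) / (dist (T.points 1) (T.points 2) +
      dist (T.points 2) (T.points 0) + dist (T.points 0) (T.points 1))) • T.points 1 +
    (dist (T.points 0) (T.points 1) / (dist (T.points 1) (T.points 2) +
      dist (T.points 2) (T.points 0) + dist (T.points 0) (T.points 1))) • T.points 2

/-- The incenter of a triangle in the Euclidean plane coincides with its orthocenter
if and only if the triangle is equilateral. -/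
theorem stmt_8 (T : Affine.Triangle ℝ (EuclideanSpace ℝ (Fin 2))) :
    incenter T = T.orthocenter ↔
      (dist (T.points 0) (T.points 1) = dist (T.points 1) (T.points 2) ∧
        dist (T.points 0) (T.points 1) = dist (T.points 0) (T.points 2)) := by
  have hinj := T.independent.injective
  set A := T.points 0 with hA
  set B := T.points 1 with hB
  set C := T.points 2 with hC
  set a := dist B C with ha
  set b := dist C A with hbdef
  set c := dist A B with hcdef
  have ha0 : 0 < a := dist_pos.2 (fun h => by exact absurd (hinj h) (by decide))
  have hb0 : 0 < b := dist_pos.2 (fun h => by exact absurd (hinj h) (by decide))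
  have hc0 : 0 < c := dist_pos.2 (fun h => by exact absurd (hinj h) (by decide))
  have hs0 : 0 < a + b + c := by linarith
  have hsne : a + b + c ≠ 0 := ne_of_gt hs0
  have hI : incenter T = (a/(a+b+c)) • A + (b/(a+b+c)) • B + (c/(a+b+c)) • C := rfl
  have hG : (Finset.univ : Finset (Fin 3)).centroid ℝ T.points
      = (3:ℝ)⁻¹ • A + (3:ℝ)⁻¹ • B + (3:ℝ)⁻¹ • C := by
    rw [Finset.centroid_def,
      Finset.affineCombination_eq_linear_combination _ _ _ (by
        simp [Finset.centroidWeights_apply])]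
    simp [Finset.centroidWeights_apply, Fin.sum_univ_three]
    rfl
  -- inner product facts
  have hp : ⟪B - A, B - A⟫ = c^2 := by
    rw [real_inner_self_eq_norm_sq]
    rw [hcdef, dist_eq_norm, ← norm_neg, neg_sub]
  have hq : ⟪C - A, C - A⟫ = b^2 := by
    rw [real_inner_self_eq_norm_sq]
    rw [hbdef, dist_eq_norm]
  have hcomm : ⟪C - A, B - A⟫ = ⟪B - A, C - A⟫ := real_inner_comm _ _
  have hr : ⟪B - A, B - A⟫ - 2 * ⟪B - A, C - A⟫ + ⟪C - A, C - A⟫ = a^2 := by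
    rw [← real_inner_sub_sub_self, real_inner_self_eq_norm_sq]
    have : B - A - (C - A) = B - C := by module
    rw [this, ha, dist_eq_norm]
  have hsqrt : ∀ x y : EuclideanSpace ℝ (Fin 2),
      inner ℝ x x = inner ℝ y y → ‖x‖ = ‖y‖ := fun x y h => by
    rw [← Real.sqrt_sq (norm_nonneg x), ← Real.sqrt_sq (norm_nonneg y),
      ← real_inner_self_eq_norm_sq, ← real_inner_self_eq_norm_sq, h]
  constructor
  · intro h
    have hO := T.orthocenter_eq_smul_vsub_vadd_circumcenter
    rw [← h, hG, vsub_eq_sub, vadd_eq_add] at hO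
    have hOeq : (2:ℝ) • T.circumcenter = A + B + C - incenter T := by
      calc (2:ℝ) • T.circumcenter
          = A + B + C - ((3:ℝ) • ((3:ℝ)⁻¹ • A + (3:ℝ)⁻¹ • B + (3:ℝ)⁻¹ • C - T.circumcenter)
            + T.circumcenter) := by module
        _ = A + B + C - incenter T := by rw [← hO]
    have h2A : (2:ℝ) • (A - T.circumcenter) = incenter T + A - B - C := by
      rw [smul_sub, hOeq]; module
    have h2B : (2:ℝ) • (B - T.circumcenter) = incenter T + B - A - C := by
      rw [smul_sub, hOeq]; module
    have h2C : (2:ℝ) • (C - T.circumcenter) = incenter T + C - A - B := by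
      rw [smul_sub, hOeq]; module
    have hnAB : ‖incenter T + A - B - C‖ = ‖incenter T + B - A - C‖ := by
      rw [← h2A, ← h2B, norm_smul, norm_smul]
      congr 1
      rw [← dist_eq_norm, ← dist_eq_norm, hA, hB,
        T.dist_circumcenter_eq_circumradius 0, T.dist_circumcenter_eq_circumradius 1]
    have hnAC : ‖incenter T + A - B - C‖ = ‖incenter T + C - A - B‖ := by
      rw [← h2A, ← h2C, norm_smul, norm_smul]
      congr 1
      rw [← dist_eq_norm, ← dist_eq_norm, hA, hC,
        T.dist_circumcenter_eq_circumradius 0, T.dist_circumcenter_eq_circumradius 2]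
    have hWA : incenter T + A - B - C
        = (b/(a+b+c) - 1) • (B - A) + (c/(a+b+c) - 1) • (C - A) := by
      rw [hI]; match_scalars <;> (field_simp; try ring)
    have key1 : ⟪incenter T + A - B - C, B - A⟫ = - ⟪B - A, B - A⟫ := by
      have hXY : (incenter T + B - A - C) = (incenter T + A - B - C) + (2:ℝ) • (B - A) := by
        module
      have hsq : ‖incenter T + A - B - C‖^2 = ‖incenter T + B - A - C‖^2 := by rw [hnAB]
      rw [← real_inner_self_eq_norm_sq, ← real_inner_self_eq_norm_sq, hXY,
        real_inner_add_add_self, real_inner_smul_left, real_inner_smul_right,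
        real_inner_smul_right] at hsq
      linarith
    have key2 : ⟪incenter T + A - B - C, C - A⟫ = - ⟪C - A, C - A⟫ := by
      have hXY : (incenter T + C - A - B) = (incenter T + A - B - C) + (2:ℝ) • (C - A) := by
        module
      have hsq : ‖incenter T + A - B - C‖^2 = ‖incenter T + C - A - B‖^2 := by rw [hnAC]
      rw [← real_inner_self_eq_norm_sq, ← real_inner_self_eq_norm_sq, hXY,
        real_inner_add_add_self, real_inner_smul_left, real_inner_smul_right,
        real_inner_smul_right] at hsq
      linarith
    rw [hWA] at key1 key2
    simp only [inner_add_left, real_inner_smul_left, hcomm] at key1 key2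
    have hrv : inner ℝ (B-A) (C-A) = (c^2 + b^2 - a^2)/2 := by linarith
    rw [hp, hrv] at key1
    rw [hrv, hq] at key2
    field_simp at key1 key2
    have e1 : (a+b+c) * ((a+b)*(c^2+b^2-a^2)) = (a+b+c) * (2*b*c^2) := by
      linear_combination (-(a+b+c) : ℝ) * key1
    have e2 : (a+b+c) * ((a+c)*(c^2+b^2-a^2)) = (a+b+c) * (2*c*b^2) := by
      linear_combination (-(a+b+c) : ℝ) * key2
    have e1' := mul_left_cancel₀ hsne e1
    have e2' := mul_left_cancel₀ hsne e2
    have hbc0 : (2*b*c*(a+b+c))*(b-c) = 0 := by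
      linear_combination (a+c)*e1' - (a+b)*e2'
    have hbcne : 2*b*c*(a+b+c) ≠ 0 := by positivity
    have hbc : b = c := by
      have := (mul_eq_zero.mp hbc0).resolve_left hbcne
      linarith
    have hac0 : (a*(2*c+a))*(c-a) = 0 := by
      linear_combination e1' + (a^2 - a*b - a*c - b^2 - b*c) * hbc
    have hacne : a*(2*c+a) ≠ 0 := by positivity
    have hac : c = a := by
      have := (mul_eq_zero.mp hac0).resolve_left hacne
      linarith
    exact ⟨hac, by rw [show dist A C = b from dist_comm A C]; exact hbc.symm⟩
  · rintro ⟨h1, h2⟩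
    have h2' : c = b := by rw [hbdef, dist_comm]; exact h2
    have hrv : inner ℝ (B-A) (C-A) = (c^2 + b^2 - a^2)/2 := by linarith
    have hv1 : A - ((3:ℝ)⁻¹ • A + (3:ℝ)⁻¹ • B + (3:ℝ)⁻¹ • C)
        = (-(3:ℝ)⁻¹) • (B-A) + (-(3:ℝ)⁻¹) • (C-A) := by module
    have hv2 : B - ((3:ℝ)⁻¹ • A + (3:ℝ)⁻¹ • B + (3:ℝ)⁻¹ • C)
        = ((2:ℝ)/3) • (B-A) + (-(3:ℝ)⁻¹) • (C-A) := by module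
    have hv3 : C - ((3:ℝ)⁻¹ • A + (3:ℝ)⁻¹ • B + (3:ℝ)⁻¹ • C)
        = (-(3:ℝ)⁻¹) • (B-A) + ((2:ℝ)/3) • (C-A) := by module
    have hGmem : (Finset.univ : Finset (Fin 3)).centroid ℝ T.points ∈
        affineSpan ℝ (Set.range T.points) :=
      centroid_mem_affineSpan_of_card_ne_zero ℝ _ (by simp)
    have hdists : ∀ i, dist (T.points i) ((Finset.univ : Finset (Fin 3)).centroid ℝ T.points)
        = dist A ((Finset.univ : Finset (Fin 3)).centroid ℝ T.points) := by
      intro i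
      fin_cases i
      · rfl
      · show dist B _ = dist A _
        rw [hG, dist_eq_norm, dist_eq_norm]
        apply hsqrt
        rw [hv2, hv1]
        simp only [inner_add_left, inner_add_right, real_inner_smul_left,
          real_inner_smul_right, hcomm, hp, hq, hrv]
        rw [← h1, ← h2']
        ring
      · show dist C _ = dist A _
        rw [hG, dist_eq_norm, dist_eq_norm]
        apply hsqrt
        rw [hv3, hv1]
        simp only [inner_add_left, inner_add_right, real_inner_smul_left,
          real_inner_smul_right, hcomm, hp, hq, hrv]
        rw [← h1, ← h2']
        ring
    have hOC : (Finset.univ : Finset (Fin 3)).centroid ℝ T.points = T.circumcenter :=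
      T.eq_circumcenter_of_dist_eq hGmem hdists
    have horth : T.orthocenter = (Finset.univ : Finset (Fin 3)).centroid ℝ T.points := by
      rw [T.orthocenter_eq_smul_vsub_vadd_circumcenter, ← hOC, vsub_self, smul_zero, zero_vadd]
    have h3 : c / (c + c + c) = (3:ℝ)⁻¹ := by
      rw [show c + c + c = (3:ℝ) * c by ring, div_eq_iff (by positivity : (3:ℝ) * c ≠ 0)]
      ring
    rw [horth, hG, hI, ← h1, ← h2', h3]
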